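/- Let A be a totally unimodular matrix representing a co-Eulerian regular oriented matroid (every signed circuit C satisfies |C^+| = |C^-|). Then a set of columns of A is affinely independent if and only if it is linearly independent. -/

import Mathlib

open Finset

def Matrix.ColDep {m n : Type*} (A : Matrix m n ℝ) (S : Finset n) : Prop :=
  ¬ LinearIndependent ℝ (fun i : S => A.transpose i.1)

def Matrix.IsCircuit {m n : Type*} (A : Matrix m n ℝ) (C : Finset n) : Prop :=
  A.ColDep C ∧ ∀ S ⊂ C, ¬ A.ColDep S

/-- A signed circuit: a circuit `C⁺ ⊔ C⁻` with `∑_{i∈C⁺} a_i - ∑_{i∈C⁻} a_i = 0`. -/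
def Matrix.IsSignedCircuit {m n : Type*} [Fintype m] [DecidableEq n]
    (A : Matrix m n ℝ) (Cp Cm : Finset n) : Prop :=
  Disjoint Cp Cm ∧ A.IsCircuit (Cp ∪ Cm) ∧
    (∑ i ∈ Cp, A.transpose i) - (∑ i ∈ Cm, A.transpose i) = 0

lemma Matrix.colDep_iff {k n : Type*} [DecidableEq n] (A : Matrix k n ℝ) (S : Finset n) :
    A.ColDep S ↔ ∃ g : n → ℝ, (∑ i ∈ S, g i • A.transpose i) = 0 ∧ ∃ i ∈ S, g i ≠ 0 := by
  unfold Matrix.ColDep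
  rw [Fintype.not_linearIndependent_iff]
  constructor
  · rintro ⟨g, hg, i, hi⟩
    refine ⟨fun x => if h : x ∈ S then g ⟨x, h⟩ else 0, ?_, i.1, i.2, by simpa [i.2] using hi⟩
    rw [← hg, Finset.univ_eq_attach,
      ← Finset.sum_attach S (fun x => (if h : x ∈ S then g ⟨x,h⟩ else 0) • A.transpose x)]
    refine Finset.sum_congr rfl fun x _ => ?_
    simp [x.2]
  · rintro ⟨g, hg, i, hiS, hi⟩
    refine ⟨fun x => g x.1, ?_, ⟨i, hiS⟩, hi⟩
    rw [Finset.univ_eq_attach, Finset.sum_attach S (fun x => g x • A.transpose x)]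
    exact hg
set_option maxHeartbeats 1000000 in
lemma ratio_lemma {k n : Type*} [Fintype k] [Fintype n] [DecidableEq n]
    (A : Matrix k n ℝ) (hA : A.IsTotallyUnimodular) {C : Finset n} (hC : A.IsCircuit C)
    {g : n → ℝ} (hsum : ∑ i ∈ C, g i • A.transpose i = 0) {j : n} (hj : j ∈ C) :
    ∀ i ∈ C, g i = g j ∨ g i = -g j ∨ g i = 0 := by
  classical
  set D : Finset n := C.erase j with hD
  have hDli : LinearIndependent ℝ (fun i : D => A.transpose i.1) := by
    by_contra hdep
    exact hC.2 D (Finset.erase_ssubset hj) hdep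
  intro i hiC
  rcases eq_or_ne i j with rfl | hij
  · exact Or.inl rfl
  have hiD : i ∈ D := Finset.mem_erase.mpr ⟨hij, hiC⟩
  set N : Matrix D k ℝ := Matrix.of (fun i (j' : k) => A j' i.1) with hN
  have hNrows : LinearIndependent ℝ (fun i : D => N i) := hDli
  have hNrank : N.rank = Fintype.card D := hNrows.rank_matrix
  have hspan : Submodule.span ℝ (Set.range N.transpose) = ⊤ := by
    apply Submodule.eq_top_of_finrank_eq
    rw [show Set.range N.transpose = Set.range N.col from rfl, ← Matrix.rank_eq_finrank_span_cols, hNrank, Module.finrank_pi]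
  obtain ⟨t, hts, htspan, htli⟩ := exists_linearIndependent ℝ (Set.range N.transpose)
  rw [hspan] at htspan
  have htfin : t.Finite := htli.setFinite
  haveI : Fintype t := htfin.fintype
  let b : Module.Basis t ℝ (D → ℝ) :=
    Module.Basis.mk htli (by rw [Subtype.range_coe, htspan])
  have hcard : Fintype.card D = Fintype.card t := by
    have h1 : Module.finrank ℝ (D → ℝ) = Fintype.card D := Module.finrank_pi ℝ
    have h2 : Module.finrank ℝ (D → ℝ) = Fintype.card t := Module.finrank_eq_card_basis b
    omega
  let e : D ≃ t := Fintype.equivOfCardEq hcard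
  have hc : ∀ u : t, ∃ j' : k, N.transpose j' = (u : D → ℝ) := fun u => hts u.2
  choose c hcspec using hc
  set r : D → k := fun ρ => c (e ρ) with hr
  set B : Matrix D D ℝ := Matrix.of (fun ρ i => A (r ρ) i.1) with hB
  have hBrow : ∀ ρ : D, B ρ = ((e ρ : t) : D → ℝ) := by
    intro ρ
    rw [← hcspec (e ρ)]
    rfl
  have hBli : LinearIndependent ℝ (fun ρ : D => B ρ) := by
    have h1 : (fun ρ : D => B ρ) = fun ρ => ((e ρ : t) : D → ℝ) := funext hBrow
    rw [h1]
    exact htli.comp e e.injective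
  have hBu : IsUnit B := Matrix.linearIndependent_rows_iff_isUnit.mp hBli
  have hBdet : IsUnit B.det := (Matrix.isUnit_iff_isUnit_det B).mp hBu
  have hBsub : B = A.submatrix r (fun i : D => i.1) := rfl
  set x : D → ℝ := fun i => g i.1 with hx
  set b0 : D → ℝ := fun ρ => A (r ρ) j with hb0
  have hmv : B.mulVec x = (-g j) • b0 := by
    funext ρ
    have h0 : ∑ i ∈ C, g i * A (r ρ) i = 0 := by
      have := congrFun hsum (r ρ)
      simpa [Finset.sum_apply] using this
    rw [← Finset.add_sum_erase C _ hj] at h0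
    have h1 : ∑ i ∈ D, g i * A (r ρ) i = -(g j * A (r ρ) j) := by
      rw [hD]; linarith
    show ∑ i : D, B ρ i * x i = _
    rw [Finset.univ_eq_attach]
    calc ∑ i ∈ D.attach, B ρ i * x i = ∑ i ∈ D.attach, g i.1 * A (r ρ) i.1 := by
          refine Finset.sum_congr rfl fun i _ => ?_
          simp [hB, hx, mul_comm]
      _ = ∑ i ∈ D, g i * A (r ρ) i := Finset.sum_attach D (fun z => g z * A (r ρ) z)
      _ = -(g j * A (r ρ) j) := h1
      _ = ((-g j) • b0) ρ := by simp [hb0, neg_mul]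
  have hcr : B.det • x = (-g j) • Matrix.cramer B b0 := by
    have : B.det • x = Matrix.cramer B ((-g j) • b0) := by
      apply Matrix.mulVec_injective_iff_isUnit.mpr hBu
      rw [Matrix.mulVec_cramer, Matrix.mulVec_smul, hmv]
    rw [this, LinearMap.map_smul]
  have hev : B.det * g i = (-g j) * (B.updateCol ⟨i, hiD⟩ b0).det := by
    have h2 := congrFun hcr ⟨i, hiD⟩
    simp only [Pi.smul_apply, smul_eq_mul, hx] at h2
    rw [h2, Matrix.cramer_apply]
  have hupd : B.updateCol ⟨i, hiD⟩ b0
      = A.submatrix r (Function.update (fun i : D => i.1) ⟨i, hiD⟩ j) := by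
    ext ρ i'
    rw [Matrix.updateCol_apply]
    by_cases h : i' = ⟨i, hiD⟩ <;> simp [h, Function.update_apply, hb0, hBsub]
  have hTU := (A.isTotallyUnimodular_iff_fintype).mp hA
  obtain ⟨s1, hs1⟩ := hTU D r (fun i : D => i.1)
  obtain ⟨s2, hs2⟩ := hTU D r (Function.update (fun i : D => i.1) ⟨i, hiD⟩ j)
  rw [← hupd] at hs2
  rw [← hBsub] at hs1
  have hne : B.det ≠ 0 := hBdet.ne_zero
  rw [← hs1, ← hs2] at hev
  rw [← hs1] at hne
  have hsign : ∀ s : SignType, (s : ℝ) = 0 ∨ (s : ℝ) = 1 ∨ (s : ℝ) = -1 := by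
    intro s
    cases s
    · exact Or.inl rfl
    · exact Or.inr (Or.inr rfl)
    · exact Or.inr (Or.inl rfl)
  rcases hsign s1 with h1 | h1 | h1 <;> rcases hsign s2 with h2 | h2 | h2 <;>
      rw [h1] at hev hne <;> rw [h2] at hev <;>
    first
      | exact absurd rfl hne
      | (left; linarith)
      | (right; left; linarith)
      | (right; right; linarith)

lemma exists_signedCircuit_of_circuit {k n : Type*} [Fintype k] [Fintype n] [DecidableEq n]
    (A : Matrix k n ℝ) (hA : A.IsTotallyUnimodular) {C : Finset n} (hC : A.IsCircuit C) :
    ∃ Cp Cm : Finset n, Cp ∪ Cm = C ∧ A.IsSignedCircuit Cp Cm := by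
  classical
  obtain ⟨g, hsum, j, hjC, hgj⟩ := (A.colDep_iff C).mp hC.1
  -- all coefficients are nonzero
  have hall : ∀ i ∈ C, g i ≠ 0 := by
    intro i hiC hgi
    refine hC.2 (C.erase i) (Finset.erase_ssubset hiC) ((A.colDep_iff _).mpr ⟨g, ?_, j, ?_, hgj⟩)
    · rw [Finset.sum_erase_eq_sub hiC, hsum, hgi]
      simp
    · exact Finset.mem_erase.mpr ⟨fun h => hgj (h ▸ hgi), hjC⟩
  have hr := ratio_lemma A hA hC hsum hjC
  set P : Finset n := C.filter (fun i => g i = g j) with hP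
  set M : Finset n := C.filter (fun i => g i = -g j) with hM
  have hdisj : Disjoint P M := by
    rw [Finset.disjoint_left]
    intro a haP haM
    rw [hP, Finset.mem_filter] at haP
    rw [hM, Finset.mem_filter] at haM
    apply hgj
    linarith [haP.2, haM.2]
  have hunion : P ∪ M = C := by
    apply Finset.Subset.antisymm
    · intro a ha
      rcases Finset.mem_union.mp ha with h | h
      · exact (Finset.mem_filter.mp h).1
      · exact (Finset.mem_filter.mp h).1
    · intro a ha
      rcases hr a ha with h | h | h
      · exact Finset.mem_union_left _ (Finset.mem_filter.mpr ⟨ha, h⟩)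
      · exact Finset.mem_union_right _ (Finset.mem_filter.mpr ⟨ha, h⟩)
      · exact absurd h (hall a ha)
  refine ⟨P, M, hunion, hdisj, hunion ▸ hC, ?_⟩
  have hsplit : ∑ i ∈ P, g i • A.transpose i + ∑ i ∈ M, g i • A.transpose i = 0 := by
    rw [← Finset.sum_union hdisj, hunion]
    exact hsum
  have hPsum : ∑ i ∈ P, g i • A.transpose i = g j • ∑ i ∈ P, A.transpose i := by
    erw [Finset.smul_sum]
    refine Finset.sum_congr rfl fun a ha => ?_
    rw [(Finset.mem_filter.mp ha).2]
  have hMsum : ∑ i ∈ M, g i • A.transpose i = -(g j • ∑ i ∈ M, A.transpose i) := by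
    erw [Finset.smul_sum, ← Finset.sum_neg_distrib]
    refine Finset.sum_congr rfl fun a ha => ?_
    rw [(Finset.mem_filter.mp ha).2, neg_smul]
  rw [hPsum, hMsum] at hsplit
  have : g j • ((∑ i ∈ P, A.transpose i) - ∑ i ∈ M, A.transpose i) = 0 := by
    rw [smul_sub]
    abel_nf
    abel_nf at hsplit
    exact hsplit
  rcases smul_eq_zero.mp this with h | h
  · exact absurd h hgj
  · exact h

/-- For a totally unimodular matrix representing a co-Eulerian regular
oriented matroid (every signed circuit has `|C⁺| = |C⁻|`), a set of columns is affinely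
independent if and only if it is linearly independent. -/
theorem affineIndependent_iff_linearIndependent_of_coEulerian
    {k n : Type*} [Fintype k] [Fintype n] [DecidableEq n]
    (A : Matrix k n ℝ) (hA : A.IsTotallyUnimodular)
    (hco : ∀ Cp Cm : Finset n, A.IsSignedCircuit Cp Cm → Cp.card = Cm.card)
    (S : Finset n) :
    AffineIndependent ℝ (fun i : S => A.transpose i.1) ↔
      LinearIndependent ℝ (fun i : S => A.transpose i.1) := by
  classical
  constructor
  · intro hAI
    by_contra hdep
    -- find a circuit inside S
    have hSdep : A.ColDep S := hdep
    obtain ⟨C, hCmem, hCmin⟩ := Finset.exists_min_image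
      ((S.powerset).filter (fun T => A.ColDep T)) Finset.card
      ⟨S, Finset.mem_filter.mpr ⟨Finset.mem_powerset_self S, hSdep⟩⟩
    rw [Finset.mem_filter, Finset.mem_powerset] at hCmem
    obtain ⟨hCS, hCdep⟩ := hCmem
    have hCcirc : A.IsCircuit C := by
      refine ⟨hCdep, fun T hT hTdep => ?_⟩
      have hTmem : T ∈ (S.powerset).filter (fun T => A.ColDep T) :=
        Finset.mem_filter.mpr ⟨Finset.mem_powerset.mpr (hT.subset.trans hCS), hTdep⟩
      exact absurd (hCmin T hTmem) (not_le.mpr (Finset.card_lt_card hT))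
    obtain ⟨P, M, hunion, hsc⟩ := exists_signedCircuit_of_circuit A hA hCcirc
    have hcards := hco P M hsc
    obtain ⟨hdisj, _, hzero⟩ := hsc
    -- build the affine dependence
    have hCne : C.Nonempty := by
      rcases Finset.eq_empty_or_nonempty C with rfl | h
      · exact absurd hCdep (by simp [Matrix.ColDep, linearIndependent_empty_type])
      · exact h
    set w : n → ℝ := fun i => if i ∈ P then 1 else if i ∈ M then -1 else 0 with hw
    set emb : {x // x ∈ C} ↪ {x // x ∈ S} :=
      ⟨fun i => ⟨i.1, hCS i.2⟩, by intro a b hab; exact Subtype.ext (by simpa using hab)⟩ with hemb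
    set s : Finset {x // x ∈ S} := C.attach.map emb with hs
    have hwP : ∀ i ∈ P, w i = 1 := fun i hi => by simp [hw, hi]
    have hwM : ∀ i ∈ M, w i = -1 := by
      intro i hi
      have hiP : i ∉ P := Finset.disjoint_right.mp hdisj hi
      simp [hw, hi, hiP]
    have hw0 : ∑ e ∈ s, w e.1 = 0 := by
      rw [hs, Finset.sum_map]
      show ∑ i ∈ C.attach, w i.1 = 0
      rw [Finset.sum_attach C w, ← hunion, Finset.sum_union hdisj,
        Finset.sum_congr rfl hwP, Finset.sum_congr rfl hwM]
      simp [hcards]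
    have hws : ∑ e ∈ s, w e.1 • A.transpose e.1 = 0 := by
      rw [hs, Finset.sum_map]
      show ∑ i ∈ C.attach, w i.1 • A.transpose i.1 = 0
      rw [Finset.sum_attach C (fun i => w i • A.transpose i), ← hunion,
        Finset.sum_union hdisj]
      have h1 : ∑ i ∈ P, w i • A.transpose i = ∑ i ∈ P, A.transpose i :=
        Finset.sum_congr rfl fun i hi => by rw [hwP i hi, one_smul]
      have h2 : ∑ i ∈ M, w i • A.transpose i = -∑ i ∈ M, A.transpose i := by
        erw [← Finset.sum_neg_distrib]
        exact Finset.sum_congr rfl fun i hi => by rw [hwM i hi, neg_one_smul]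
      rw [h1, h2, ← sub_eq_add_neg]
      exact hzero
    obtain ⟨i0, hi0⟩ := hCne
    have he0 : (⟨i0, hCS hi0⟩ : {x // x ∈ S}) ∈ s := by
      rw [hs, Finset.mem_map]
      exact ⟨⟨i0, hi0⟩, Finset.mem_attach _ _, rfl⟩
    have := affineIndependent_iff.mp hAI s (fun e => w e.1) hw0 hws _ he0
    have h1 : w i0 = 0 := this
    rcases Finset.mem_union.mp (hunion ▸ hi0) with h | h
    · rw [hwP i0 h] at h1; norm_num at h1
    · rw [hwM i0 h] at h1; norm_num at h1
  · intro hLI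
    rw [affineIndependent_iff]
    intro s w _ hws
    exact linearIndependent_iff'.mp hLI s w hws
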